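/- Let (𝒢_i)_{i∈I} be a family of locally compact groupoids satisfying the weak gluing condition. If each 𝒢_i is a Hausdorff topological space, then the glued groupoid 𝒢 = ⋃_{i∈I} 𝒢_i is Hausdorff. -/

import Mathlib

/-!
Statement 0: gluing of locally compact groupoids.  We model a (locally compact)
groupoid `𝒢 ⇉ U` over a set of units `U ⊆ X` by a type `A` of arrows together
with (total) structural maps; multiplication is a total function whose value is
only relevant on composable pairs.  The gluing is the quotient of the disjoint
union `Σ i, A i` by the relation generated by `g ∼ φ_{ji} g`.
-/

universe u v

/-- An (algebraic) groupoid with arrow space `A` over the set of units `U ⊆ X`. -/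
structure GroupoidOn (X : Type u) (A : Type v) (U : Set X) where
  d : A → X
  r : A → X
  unit : U → A
  inv : A → A
  mul : A → A → A
  d_mem : ∀ g, d g ∈ U
  r_mem : ∀ g, r g ∈ U
  d_unit : ∀ x : U, d (unit x) = x
  r_unit : ∀ x : U, r (unit x) = x
  d_inv : ∀ g, d (inv g) = r g
  r_inv : ∀ g, r (inv g) = d g
  d_mul : ∀ g h, d g = r h → d (mul g h) = d h
  r_mul : ∀ g h, d g = r h → r (mul g h) = r g
  mul_assoc' : ∀ g h k, d g = r h → d h = r k → mul (mul g h) k = mul g (mul h k)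
  unit_mul : ∀ g, mul (unit ⟨r g, r_mem g⟩) g = g
  mul_unit : ∀ g, mul g (unit ⟨d g, d_mem g⟩) = g
  mul_inv : ∀ g, mul g (inv g) = unit ⟨r g, r_mem g⟩
  inv_mul : ∀ g, mul (inv g) g = unit ⟨d g, d_mem g⟩

namespace GroupoidOn

variable {X : Type u} {A : Type v} {U : Set X}

/-- The reduction set `𝒢|_V = d⁻¹(V) ∩ r⁻¹(V)` of a groupoid to `V ⊆ X`. -/
def res (G : GroupoidOn X A U) (V : Set X) : Set A :=
  {g | G.d g ∈ V ∧ G.r g ∈ V}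

end GroupoidOn

/-- `G` is a topological groupoid: continuous structural maps, `d` surjective
(onto the units) and open. Together with local compactness of the arrow and unit
spaces this is the notion of a locally compact groupoid. -/
structure IsTopGroupoid {X : Type u} {A : Type v} {U : Set X}
    [TopologicalSpace X] [TopologicalSpace A] (G : GroupoidOn X A U) : Prop where
  continuous_d : Continuous G.d
  continuous_r : Continuous G.r
  continuous_unit : Continuous G.unit
  continuous_inv : Continuous G.inv
  continuousOn_mul : ContinuousOn (fun p : A × A => G.mul p.1 p.2)
    {p : A × A | G.d p.1 = G.r p.2}
  d_surj : U ⊆ Set.range G.d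
  isOpenMap_d : IsOpenMap G.d

/-- The data needed to glue a family of locally compact groupoids `𝒢_i ⇉ U_i`
over an open cover `(U_i)` of `X`, via compatible isomorphisms
`φ_{ij} : 𝒢_i|_{U_i ∩ U_j} → 𝒢_j|_{U_i ∩ U_j}` of topological groupoids. -/
structure GluingData (X : Type u) [TopologicalSpace X] (I : Type v)
    (U : I → Set X) (A : I → Type u) [∀ i, TopologicalSpace (A i)] where
  G : ∀ i, GroupoidOn X (A i) (U i)
  top : ∀ i, IsTopGroupoid (G i)
  open_U : ∀ i, IsOpen (U i)
  cover : ∀ x : X, ∃ i, x ∈ U i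
  φ : ∀ i j, A i → A j
  φ_mapsTo : ∀ i j, Set.MapsTo (φ i j) ((G i).res (U i ∩ U j)) ((G j).res (U i ∩ U j))
  φ_d : ∀ i j, ∀ g ∈ (G i).res (U i ∩ U j), (G j).d (φ i j g) = (G i).d g
  φ_r : ∀ i j, ∀ g ∈ (G i).res (U i ∩ U j), (G j).r (φ i j g) = (G i).r g
  φ_unit : ∀ i j, ∀ (x : X) (hx : x ∈ U i ∩ U j),
    φ i j ((G i).unit ⟨x, hx.1⟩) = (G j).unit ⟨x, hx.2⟩
  φ_inv : ∀ i j, ∀ g ∈ (G i).res (U i ∩ U j), φ i j ((G i).inv g) = (G j).inv (φ i j g)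
  φ_mul : ∀ i j, ∀ g h, g ∈ (G i).res (U i ∩ U j) → h ∈ (G i).res (U i ∩ U j) →
    (G i).d g = (G i).r h →
    φ i j ((G i).mul g h) = (G j).mul (φ i j g) (φ i j h)
  φ_id : ∀ i g, φ i i g = g
  φ_symm : ∀ i j, ∀ g ∈ (G i).res (U i ∩ U j), φ j i (φ i j g) = g
  φ_trans : ∀ i j k, ∀ g ∈ (G i).res (U i ∩ U j ∩ U k), φ j k (φ i j g) = φ i k g
  φ_cont : ∀ i j, ContinuousOn (φ i j) ((G i).res (U i ∩ U j))

namespace GluingData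

variable {X : Type u} [TopologicalSpace X] {I : Type v}
  {U : I → Set X} {A : I → Type u} [∀ i, TopologicalSpace (A i)]

/-- The relation `g ∼ φ_{ij} g` on the disjoint union of the arrow spaces. -/
def Rel (D : GluingData X I U A) : (Σ i, A i) → (Σ i, A i) → Prop :=
  fun p q => p.2 ∈ (D.G p.1).res (U p.1 ∩ U q.1) ∧ D.φ p.1 q.1 p.2 = q.2

/-- The glued space `𝒢 = ⨆ᵢ 𝒢ᵢ / ∼`, with the quotient topology. -/
def Glued (D : GluingData X I U A) : Type max u v :=
  Quot D.Rel

instance (D : GluingData X I U A) : TopologicalSpace D.Glued :=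
  inferInstanceAs (TopologicalSpace (Quot D.Rel))

/-- The canonical quotient map `π_i : 𝒢_i → 𝒢`. -/
def π (D : GluingData X I U A) (i : I) (g : A i) : D.Glued :=
  Quot.mk D.Rel ⟨i, g⟩

end GluingData

namespace GluingData

variable {X : Type u} [TopologicalSpace X] {I : Type v}
  {U : I → Set X} {A : I → Type u} [∀ i, TopologicalSpace (A i)]

/-- The **weak gluing condition**: every composable pair of arrows of the glued
space has both members represented in a single `𝒢_i`. -/
def WeakGluing (D : GluingData X I U A) : Prop :=
  ∀ p q : Σ i, A i, (D.G p.1).d p.2 = (D.G q.1).r q.2 →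
    ∃ (k : I) (g h : A k),
      D.π k g = Quot.mk D.Rel p ∧ D.π k h = Quot.mk D.Rel q

end GluingData

namespace GroupoidOn

variable {X : Type u} {A : Type v} {U : Set X}

theorem unit_congr (G : GroupoidOn X A U) {x y : X} (hx : x ∈ U) (hy : y ∈ U)
    (h : x = y) : G.unit ⟨x, hx⟩ = G.unit ⟨y, hy⟩ := by subst h; rfl

theorem inv_inv' (G : GroupoidOn X A U) (g : A) : G.inv (G.inv g) = g := by
  have h1 : G.mul (G.inv (G.inv g)) (G.inv g) = G.unit ⟨G.r g, G.r_mem g⟩ := by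
    rw [G.inv_mul (G.inv g)]
    exact G.unit_congr _ _ (G.d_inv g)
  have hd : G.d (G.inv (G.inv g)) = G.d g := by rw [G.d_inv, G.r_inv]
  calc G.inv (G.inv g)
      = G.mul (G.inv (G.inv g)) (G.unit ⟨G.d (G.inv (G.inv g)), G.d_mem _⟩) :=
        (G.mul_unit _).symm
    _ = G.mul (G.inv (G.inv g)) (G.mul (G.inv g) g) := by
        rw [G.inv_mul g]; congr 1; exact G.unit_congr _ _ hd
    _ = G.mul (G.mul (G.inv (G.inv g)) (G.inv g)) g :=
        (G.mul_assoc' _ _ _ (G.d_inv (G.inv g)) (G.d_inv g)).symm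
    _ = G.mul (G.unit ⟨G.r g, G.r_mem g⟩) g := by rw [h1]
    _ = g := G.unit_mul g

end GroupoidOn

namespace GluingData

variable {X : Type u} [TopologicalSpace X] {I : Type v}
  {U : I → Set X} {A : I → Type u} [∀ i, TopologicalSpace (A i)]
  (D : GluingData X I U A)

theorem rel_equivalence : Equivalence D.Rel := by
  constructor
  · rintro ⟨i, g⟩
    exact ⟨⟨⟨(D.G i).d_mem g, (D.G i).d_mem g⟩, (D.G i).r_mem g, (D.G i).r_mem g⟩,
      D.φ_id i g⟩
  · rintro ⟨i, g⟩ ⟨j, h⟩ ⟨hg, hφ⟩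
    dsimp only at hg hφ
    subst hφ
    have hm := D.φ_mapsTo i j hg
    exact ⟨⟨⟨hm.1.2, hm.1.1⟩, hm.2.2, hm.2.1⟩, D.φ_symm i j g hg⟩
  · rintro ⟨i, g⟩ ⟨j, h⟩ ⟨k, l⟩ ⟨hg, hφ1⟩ ⟨hh, hφ2⟩
    dsimp only at hg hφ1 hh hφ2
    subst hφ1; subst hφ2
    have hdg : (D.G i).d g ∈ U k := by
      have := hh.1.2; rwa [D.φ_d i j g hg] at this
    have hrg : (D.G i).r g ∈ U k := by
      have := hh.2.2; rwa [D.φ_r i j g hg] at this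
    have hres : g ∈ (D.G i).res (U i ∩ U j ∩ U k) :=
      ⟨⟨hg.1, hdg⟩, hg.2, hrg⟩
    exact ⟨⟨⟨hg.1.1, hdg⟩, hg.2.1, hrg⟩, (D.φ_trans i j k g hres).symm⟩

theorem mk_eq_iff {p q : Σ i, A i} :
    Quot.mk D.Rel p = Quot.mk D.Rel q ↔ D.Rel p q :=
  Quot.eq.trans D.rel_equivalence.eqvGen_iff

theorem π_inj {k : I} {a b : A k} (h : D.π k a = D.π k b) : a = b := by
  have h2 := (D.mk_eq_iff.mp h).2
  rwa [D.φ_id] at h2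

theorem rel_inv {k i : I} {a : A k} {b : A i} (h : D.Rel ⟨k, a⟩ ⟨i, b⟩) :
    D.Rel ⟨k, (D.G k).inv a⟩ ⟨i, (D.G i).inv b⟩ := by
  obtain ⟨ha, hφ⟩ := h
  dsimp only at ha hφ
  subst hφ
  have hmem : (D.G k).inv a ∈ (D.G k).res (U k ∩ U i) := by
    refine ⟨?_, ?_⟩
    · rw [(D.G k).d_inv]; exact ha.2
    · rw [(D.G k).r_inv]; exact ha.1
  exact ⟨hmem, D.φ_inv k i a ha⟩

theorem isOpen_res (i : I) {V : Set X} (hV : IsOpen V) :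
    IsOpen ((D.G i).res V) :=
  (hV.preimage (D.top i).continuous_d).inter (hV.preimage (D.top i).continuous_r)

theorem isOpen_pi_image {k : I} {V : Set (A k)} (hV : IsOpen V) :
    IsOpen {z : D.Glued | ∃ a ∈ V, D.π k a = z} := by
  refine isQuotientMap_quot_mk.isOpen_preimage.mp ?_
  rw [isOpen_sigma_iff]
  intro l
  have heq : Sigma.mk l ⁻¹' (Quot.mk D.Rel ⁻¹' {z : D.Glued | ∃ a ∈ V, D.π k a = z}) =
      (D.G l).res (U l ∩ U k) ∩ (D.φ l k) ⁻¹' V := by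
    ext b
    simp only [Set.mem_preimage, Set.mem_setOf_eq, Set.mem_inter_iff]
    constructor
    · rintro ⟨a, ha, hq⟩
      have hrel : D.Rel ⟨l, b⟩ ⟨k, a⟩ :=
        D.rel_equivalence.symm (D.mk_eq_iff.mp hq)
      obtain ⟨hb, hba⟩ := hrel
      dsimp only at hb hba
      exact ⟨hb, by rw [hba]; exact ha⟩
    · rintro ⟨hb, hv⟩
      exact ⟨D.φ l k b, hv,
        D.mk_eq_iff.mpr (D.rel_equivalence.symm ⟨hb, rfl⟩)⟩
  erw [heq]
  exact (D.φ_cont l k).isOpen_inter_preimage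
    (D.isOpen_res l ((D.open_U l).inter (D.open_U k))) hV

/-- The range map descends to the glued groupoid. -/
def rMap : D.Glued → X :=
  Quot.lift (fun p : Σ i, A i => (D.G p.1).r p.2)
    (by rintro ⟨i, g⟩ ⟨j, h⟩ ⟨hg, hφ⟩
        dsimp only at hg hφ
        subst hφ
        exact (D.φ_r i j g hg).symm)

theorem continuous_rMap : Continuous D.rMap :=
  continuous_quot_lift _ (continuous_sigma fun i => (D.top i).continuous_r)

end GluingData

/-- Let `(𝒢_i)_{i∈I}` be a family of locally compact groupoids
satisfying the weak gluing condition.  If each `𝒢_i` is a Hausdorff groupoid,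
then the glued groupoid `𝒢 = ⋃_{i∈I} 𝒢_i` is Hausdorff. -/
theorem statement_2
    {X : Type u} [TopologicalSpace X] [LocallyCompactSpace X] [T2Space X]
    {I : Type v} {U : I → Set X} {A : I → Type u} [∀ i, TopologicalSpace (A i)]
    [∀ i, LocallyCompactSpace (A i)]
    (D : GluingData X I U A) (hw : D.WeakGluing)
    (h2 : ∀ i, T2Space (A i)) :
    T2Space D.Glued := by
  constructor
  intro x y hxy
  induction x using Quot.ind with | _ p => ?_
  induction y using Quot.ind with | _ q => ?_
  obtain ⟨i, g⟩ := p
  obtain ⟨j, h⟩ := q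
  by_cases hr : (D.G i).r g = (D.G j).r h
  · -- both arrows can be moved to a single chart `A k`
    have hcomp : (D.G i).d ((D.G i).inv g) = (D.G j).r h := by
      rw [(D.G i).d_inv]; exact hr
    obtain ⟨k, g', h', hg', hh'⟩ := hw ⟨i, (D.G i).inv g⟩ ⟨j, h⟩ hcomp
    have hrel : D.Rel ⟨k, g'⟩ ⟨i, (D.G i).inv g⟩ := D.mk_eq_iff.mp hg'
    have hrel2 : D.Rel ⟨k, (D.G k).inv g'⟩ ⟨i, g⟩ := by
      have hri := D.rel_inv hrel
      rwa [(D.G i).inv_inv'] at hri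
    have hx : D.π k ((D.G k).inv g') = Quot.mk D.Rel ⟨i, g⟩ := D.mk_eq_iff.mpr hrel2
    have hne : (D.G k).inv g' ≠ h' := by
      intro hEq
      exact hxy (by rw [← hx, hEq, hh'])
    haveI := h2 k
    obtain ⟨V₁, V₂, hV₁, hV₂, hm1, hm2, hdisj⟩ := t2_separation hne
    refine ⟨{z | ∃ a ∈ V₁, D.π k a = z}, {z | ∃ a ∈ V₂, D.π k a = z},
      D.isOpen_pi_image hV₁, D.isOpen_pi_image hV₂,
      ⟨_, hm1, hx⟩, ⟨_, hm2, hh'⟩, ?_⟩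
    rw [Set.disjoint_left]
    rintro z ⟨a, ha, rfl⟩ ⟨b, hb, hab⟩
    have hba : b = a := D.π_inj hab
    exact (Set.disjoint_left.mp hdisj ha) (hba ▸ hb)
  · -- the ranges differ; separate via the continuous range map to `X`
    obtain ⟨V₁, V₂, hV₁, hV₂, hm1, hm2, hdisj⟩ := t2_separation hr
    exact ⟨D.rMap ⁻¹' V₁, D.rMap ⁻¹' V₂, hV₁.preimage D.continuous_rMap,
      hV₂.preimage D.continuous_rMap, hm1, hm2, hdisj.preimage _⟩
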